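/- Let C_{HL,c}(α) = sup over measurable sets E ⊆ ℝⁿ with 0 < |E| < ∞ of (1/|E|)·|{x ∈ ℝⁿ : M_{HL,c} χ_E(x) > α}|. There exist a constant c_n > 0 depending only on n and a threshold α₀ ∈ (0,1) such that for all α ∈ (α₀, 1), C_{HL,c}(α) − 1 ≥ c_n · (1/α − 1)^{1/n}. -/

import Mathlib

open MeasureTheory Set Filter
open scoped ENNReal Pointwise RealInnerProductSpace

/-- `Q` is an open cube in `ℝⁿ` (not necessarily axis-parallel): the image
of the open unit cube under a rotation/reflection, a dilation and a
translation. -/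
def IsCube {n : ℕ} (Q : Set (EuclideanSpace ℝ (Fin n))) : Prop :=
  ∃ (a : EuclideanSpace ℝ (Fin n)) (r : ℝ)
    (O : EuclideanSpace ℝ (Fin n) ≃ₗᵢ[ℝ] EuclideanSpace ℝ (Fin n)), 0 < r ∧
      Q = (fun y => a + r • O y) ''
        {y : EuclideanSpace ℝ (Fin n) | ∀ i, y i ∈ Set.Ioo (0 : ℝ) 1}

/-- The uncentered Hardy–Littlewood maximal operator with respect to open
(not necessarily axis-parallel) cubes on `ℝⁿ`. -/
noncomputable def MHLc (n : ℕ) (f : EuclideanSpace ℝ (Fin n) → ℝ≥0∞)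
    (x : EuclideanSpace ℝ (Fin n)) : ℝ≥0∞ :=
  ⨆ (Q : Set (EuclideanSpace ℝ (Fin n))) (_ : IsCube Q) (_ : x ∈ Q),
    (∫⁻ y in Q, f y) / volume Q

/-- The sharp Tauberian constant `C_{HL,c}(α)` of the uncentered
Hardy–Littlewood maximal operator with respect to cubes. -/
noncomputable def CHLc (n : ℕ) (α : ℝ) : ℝ≥0∞ :=
  ⨆ (E : Set (EuclideanSpace ℝ (Fin n))) (_ : MeasurableSet E)
    (_ : 0 < volume E) (_ : volume E < ⊤),
    volume {x : EuclideanSpace ℝ (Fin n) |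
      MHLc n (E.indicator 1) x > ENNReal.ofReal α} / volume E

lemma volume_pi_set {n : ℕ} (S : Fin n → Set ℝ) (hS : ∀ i, MeasurableSet (S i)) :
    volume {y : EuclideanSpace ℝ (Fin n) | ∀ i, y i ∈ S i} = ∏ i, volume (S i) := by
  have h : {y : EuclideanSpace ℝ (Fin n) | ∀ i, y i ∈ S i}
      = ((MeasurableEquiv.toLp 2 (Fin n → ℝ)).symm) ⁻¹' (Set.univ.pi S) := by
    ext y; simp [Set.mem_pi]
  rw [h, (EuclideanSpace.volume_preserving_symm_measurableEquiv_toLp (Fin n)).measure_preimage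
    ((MeasurableSet.univ_pi hS).nullMeasurableSet), volume_pi_pi]

lemma volume_image_affine {n : ℕ} (a : EuclideanSpace ℝ (Fin n)) {r : ℝ} (hr : 0 ≤ r)
    (O : EuclideanSpace ℝ (Fin n) ≃ₗᵢ[ℝ] EuclideanSpace ℝ (Fin n))
    (S : Set (EuclideanSpace ℝ (Fin n))) (hS : MeasurableSet S) :
    volume ((fun y => a + r • O y) '' S) = ENNReal.ofReal (r ^ n) * volume S := by
  have h : (fun y => a + r • O y) '' S = a +ᵥ (r • (O '' S)) := by
    rw [← Set.image_vadd, ← Set.image_smul, Set.image_image, Set.image_image]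
    rfl
  have hO : O '' S = O.symm ⁻¹' S := by
    ext x
    constructor
    · rintro ⟨z, hz, rfl⟩; simpa using hz
    · intro hx; exact ⟨O.symm x, hx, by simp⟩
  rw [h, measure_vadd, Measure.addHaar_smul_of_nonneg _ hr, hO,
    O.symm.measurePreserving.measure_preimage hS.nullMeasurableSet,
    finrank_euclideanSpace_fin]

lemma abs_coord_le_norm {n : ℕ} (v : EuclideanSpace ℝ (Fin n)) (i : Fin n) : |v i| ≤ ‖v‖ := by
  rw [EuclideanSpace.norm_eq,
    show |v i| = Real.sqrt (‖v i‖ ^ 2) by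
      rw [Real.sqrt_sq_eq_abs, Real.norm_eq_abs, abs_abs]]
  exact Real.sqrt_le_sqrt (Finset.single_le_sum (f := fun j => ‖v j‖ ^ 2)
    (fun j _ => by positivity) (Finset.mem_univ i))

set_option maxHeartbeats 2000000 in
theorem uncentered_cube_solyanik_lower (n : ℕ) (hn : 1 ≤ n) :
    ∃ c : ℝ, 0 < c ∧ ∃ α₀ ∈ Set.Ioo (0 : ℝ) 1, ∀ α ∈ Set.Ioo α₀ 1,
      ENNReal.ofReal (c * (1 / α - 1) ^ ((n : ℝ)⁻¹)) ≤ CHLc n α - 1 := by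
  have hnR : (1:ℝ) ≤ n := by exact_mod_cast hn
  have hn0 : (0:ℝ) < n := by linarith
  set sn := Real.sqrt n with hsndef
  have hsn0 : 0 < sn := Real.sqrt_pos.2 hn0
  have hsn1 : 1 ≤ sn := by
    rw [hsndef, show (1:ℝ) = Real.sqrt 1 by simp]
    exact Real.sqrt_le_sqrt hnR
  have hsnsq : sn * sn = n := Real.mul_self_sqrt (le_of_lt hn0)
  set r : ℝ := (4 * sn)⁻¹ with hrdef
  have hr0 : 0 < r := by positivity
  have hrsn : r * sn = 4⁻¹ := by
    rw [hrdef]; field_simp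
  -- the index and basic vectors
  set i₀ : Fin n := ⟨0, hn⟩ with hi₀
  set e : EuclideanSpace ℝ (Fin n) := EuclideanSpace.single i₀ 1 with he
  set dv : EuclideanSpace ℝ (Fin n) := (WithLp.equiv 2 (Fin n → ℝ)).symm (fun _ => sn⁻¹) with hdv
  have hdvco : ∀ j, dv j = sn⁻¹ := fun j => rfl
  have heco : ∀ j, e j = if j = i₀ then 1 else 0 := by
    intro j; rw [he, EuclideanSpace.single_apply]
  have hnorme : ‖e‖ = 1 := by simp [he, EuclideanSpace.norm_single]
  have hnormd : ‖dv‖ = 1 := by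
    rw [EuclideanSpace.norm_eq]
    simp only [hdvco]
    rw [Finset.sum_const, Finset.card_univ, Fintype.card_fin]
    rw [show ‖sn⁻¹‖ ^ 2 = (sn*sn)⁻¹ by rw [Real.norm_eq_abs, abs_inv, abs_of_pos hsn0]; ring]
    rw [hsnsq]
    have hne : (n:ℝ) ≠ 0 := ne_of_gt hn0
    rw [nsmul_eq_mul, mul_inv_cancel₀ hne, Real.sqrt_one]
  set O : EuclideanSpace ℝ (Fin n) ≃ₗᵢ[ℝ] EuclideanSpace ℝ (Fin n) :=
    Submodule.reflection (ℝ ∙ (dv - e))ᗮ with hO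
  have hOd : O dv = e := Submodule.reflection_sub (by rw [hnorme, hnormd])
  have hcoord : ∀ y : EuclideanSpace ℝ (Fin n), O y i₀ = sn⁻¹ * ∑ j, y j := by
    intro y
    have h1 : O y i₀ = ⟪e, O y⟫ := by
      rw [he, EuclideanSpace.inner_single_left]; simp
    rw [h1, ← hOd, O.inner_map_map, PiLp.inner_apply]
    simp only [hdvco, RCLike.inner_apply, conj_trivial]
    rw [Finset.mul_sum]
    exact Finset.sum_congr rfl (fun _ _ => mul_comm _ _)
  set onev : EuclideanSpace ℝ (Fin n) := (WithLp.equiv 2 (Fin n → ℝ)).symm (fun _ => (1:ℝ))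
    with honevdef
  have honevco : ∀ j, onev j = 1 := fun j => rfl
  have honev : onev = sn • dv := by
    apply PiLp.ext; intro j
    rw [PiLp.smul_apply, hdvco, honevco, smul_eq_mul, mul_inv_cancel₀ (ne_of_gt hsn0)]
  have hOone : O onev = sn • e := by rw [honev, O.map_smul, hOd]
  -- the unit cube
  set U : Set (EuclideanSpace ℝ (Fin n)) := {y | ∀ i, y i ∈ Set.Ioo (0:ℝ) 1} with hUdef
  have hUmeas : MeasurableSet U := by
    rw [hUdef, show {y : EuclideanSpace ℝ (Fin n) | ∀ i, y i ∈ Set.Ioo (0:ℝ) 1}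
      = ((MeasurableEquiv.toLp 2 (Fin n → ℝ)).symm) ⁻¹' (Set.univ.pi fun _ => Set.Ioo (0:ℝ) 1) by
        ext y; simp [Set.mem_pi]]
    exact (MeasurableSet.univ_pi fun _ => measurableSet_Ioo).preimage
      ((MeasurableEquiv.toLp 2 (Fin n → ℝ)).symm).measurable
  have hUvol : volume U = 1 := by
    rw [hUdef, volume_pi_set _ (fun _ => measurableSet_Ioo)]
    simp [Real.volume_Ioo]
  -- the integral of the indicator over any set
  have hint : ∀ Q : Set (EuclideanSpace ℝ (Fin n)),
      (∫⁻ y in Q, U.indicator 1 y) = volume (U ∩ Q) := by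
    intro Q
    rw [lintegral_indicator hUmeas, Measure.restrict_restrict hUmeas]
    simp only [Pi.one_apply]
    rw [setLIntegral_one]
  -- lower bound for MHLc by a single cube
  have hMle : ∀ (x : EuclideanSpace ℝ (Fin n)) (Q : Set (EuclideanSpace ℝ (Fin n))),
      IsCube Q → x ∈ Q →
      (∫⁻ y in Q, U.indicator 1 y) / volume Q ≤ MHLc n (U.indicator 1) x := by
    intro x Q hc hx
    have h1 : (∫⁻ y in Q, U.indicator 1 y) / volume Q
        = ⨆ (_ : IsCube Q), ⨆ (_ : x ∈ Q), (∫⁻ y in Q, U.indicator 1 y) / volume Q := by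
      rw [iSup_pos hc, iSup_pos hx]
    rw [h1]
    exact le_iSup (fun Q => ⨆ (_ : IsCube Q), ⨆ (_ : x ∈ Q),
      (∫⁻ y in Q, U.indicator 1 y) / volume Q) Q
  -- main pointwise claim
  refine ⟨r * (2⁻¹)^n / (4 * sn), by positivity, 2⁻¹, ⟨by norm_num, by norm_num⟩, ?_⟩
  intro α ⟨hα2, hα1⟩
  have hα0 : 0 < α := by linarith
  set β : ℝ := 1 - α with hβdef
  have hβ0 : 0 < β := by rw [hβdef]; linarith
  have hβ2 : β < 2⁻¹ := by rw [hβdef]; linarith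
  set t : ℝ := r * β ^ ((n:ℝ)⁻¹) / (2 * sn) with htdef
  have hβr0 : 0 < β ^ ((n:ℝ)⁻¹) := Real.rpow_pos_of_pos hβ0 _
  have hβr1 : β ^ ((n:ℝ)⁻¹) ≤ 1 := by
    apply Real.rpow_le_one (le_of_lt hβ0) (by linarith) (by positivity)
  have ht0 : 0 < t := by rw [htdef]; positivity
  have htsn : t * sn = r * β ^ ((n:ℝ)⁻¹) / 2 := by
    rw [htdef]; field_simp
  have htrsn : t < r * sn := by
    have h1 : t ≤ r / (2*sn) := by
      rw [htdef, div_le_div_iff₀ (by positivity) (by positivity)]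
      nlinarith [hβr1, hr0.le, hsn0.le]
    have h2 : r / (2*sn) < r * sn := by
      rw [div_lt_iff₀ (by positivity)]
      nlinarith [hsnsq, hr0, hsn1]
    linarith
  -- measurability of coordinate boxes
  have hmeas_pi : ∀ (S : Fin n → Set ℝ), (∀ i, MeasurableSet (S i)) →
      MeasurableSet {y : EuclideanSpace ℝ (Fin n) | ∀ i, y i ∈ S i} := by
    intro S hS
    rw [show {y : EuclideanSpace ℝ (Fin n) | ∀ i, y i ∈ S i}
      = ((MeasurableEquiv.toLp 2 (Fin n → ℝ)).symm) ⁻¹' (Set.univ.pi S) by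
        ext y; simp [Set.mem_pi]]
    exact (MeasurableSet.univ_pi hS).preimage
      ((MeasurableEquiv.toLp 2 (Fin n → ℝ)).symm).measurable
  -- the slab F above the top face
  set Fs : Fin n → Set ℝ :=
    Function.update (fun _ => Set.Ioo (4⁻¹:ℝ) (4⁻¹+2⁻¹)) i₀ (Set.Ioo 1 (1+t/2)) with hFsdef
  have hFs_i₀ : Fs i₀ = Set.Ioo 1 (1+t/2) := by rw [hFsdef, Function.update_self]
  have hFs_ne : ∀ j, j ≠ i₀ → Fs j = Set.Ioo (4⁻¹:ℝ) (4⁻¹+2⁻¹) := by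
    intro j hj; rw [hFsdef, Function.update_of_ne hj]
  set F : Set (EuclideanSpace ℝ (Fin n)) := {x | ∀ i, x i ∈ Fs i} with hFdef
  have hFsmeas : ∀ i, MeasurableSet (Fs i) := by
    intro i
    by_cases hi : i = i₀
    · rw [hi, hFs_i₀]; exact measurableSet_Ioo
    · rw [hFs_ne i hi]; exact measurableSet_Ioo
  have hFmeas : MeasurableSet F := hmeas_pi Fs hFsmeas
  have hpow2 : (2⁻¹:ℝ)^n = 2⁻¹ * 2⁻¹^(n-1) := by
    rw [← pow_succ']; congr 1; omega
  have hFvol : volume F = ENNReal.ofReal (t * (2⁻¹)^n) := by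
    have hc1 : volume (Set.Ioo (1:ℝ) (1+t/2)) = ENNReal.ofReal (t/2) := by
      rw [Real.volume_Ioo]; congr 1; ring
    have hc2 : volume (Set.Ioo (4⁻¹:ℝ) (4⁻¹+2⁻¹)) = ENNReal.ofReal 2⁻¹ := by
      rw [Real.volume_Ioo]; congr 1; ring
    rw [hFdef, volume_pi_set Fs hFsmeas,
      ← Finset.mul_prod_erase Finset.univ _ (Finset.mem_univ i₀)]
    have hprod : ∏ j ∈ Finset.univ.erase i₀, volume (Fs j) = (ENNReal.ofReal 2⁻¹)^(n-1) := by
      rw [Finset.prod_congr rfl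
        (fun j hj => by rw [hFs_ne j (Finset.ne_of_mem_erase hj), hc2])]
      rw [Finset.prod_const, Finset.card_erase_of_mem (Finset.mem_univ i₀), Finset.card_univ,
        Fintype.card_fin]
    rw [hFs_i₀, hc1, hprod,
      ← ENNReal.ofReal_pow (by norm_num), ← ENNReal.ofReal_mul (by positivity)]
    congr 1
    rw [hpow2]; ring
  have hdisjUF : Disjoint U F := by
    rw [Set.disjoint_left]
    intro x hxU hxF
    have h1 : x i₀ < 1 := (hxU i₀).2
    have h2 : 1 < x i₀ := by
      have := hxF i₀; rw [hFs_i₀] at this; exact this.1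
    linarith
  -- the key pointwise estimate
  have hkey : ∀ x ∈ U ∪ F, ENNReal.ofReal α < MHLc n (U.indicator 1) x := by
    rintro x (hxU | hxF)
    · -- x in the unit cube: use the cube U itself
      have hcube : IsCube U := by
        refine ⟨0, 1, LinearIsometryEquiv.refl ℝ _, one_pos, ?_⟩
        rw [hUdef]; ext z; simp
      calc ENNReal.ofReal α < 1 := ENNReal.ofReal_lt_one.2 hα1
        _ = (∫⁻ y in U, U.indicator 1 y) / volume U := by
            rw [hint U, Set.inter_self, hUvol, div_one]
        _ ≤ MHLc n (U.indicator 1) x := hMle x U hcube hxU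
    · -- x in the slab F : use a tilted cube
      have hxi₀ : x i₀ ∈ Set.Ioo (1:ℝ) (1+t/2) := by
        have := hxF i₀; rwa [hFs_i₀] at this
      have hxne : ∀ j, j ≠ i₀ → x j ∈ Set.Ioo (4⁻¹:ℝ) (4⁻¹+2⁻¹) := by
        intro j hj; have := hxF j; rwa [hFs_ne j hj] at this
      set d' : ℝ := 1 + t - x i₀ with hd'def
      have hd'l : t/2 < d' := by rw [hd'def]; have := hxi₀.2; linarith
      have hd'u : d' < t := by rw [hd'def]; have := hxi₀.1; linarith
      have hd'0 : 0 < d' := by linarith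
      have hd'rsn : d' < r * sn := lt_trans hd'u htrsn
      set v : EuclideanSpace ℝ (Fin n) := x + d' • e with hvdef
      set a : EuclideanSpace ℝ (Fin n) := v - (r*sn) • e with hadef
      set φ : EuclideanSpace ℝ (Fin n) → EuclideanSpace ℝ (Fin n) :=
        fun y => a + r • O y with hφdef
      set Q : Set (EuclideanSpace ℝ (Fin n)) := φ '' U with hQdef
      have hQcube : IsCube Q := ⟨a, r, O, hr0, by rw [hQdef, hφdef, hUdef]⟩
      -- x belongs to Q
      set θ : ℝ := 1 - d'/(r*sn) with hθdef
      have hθ0 : 0 < θ := by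
        rw [hθdef]; have : d'/(r*sn) < 1 := (div_lt_one (by positivity)).2 hd'rsn
        linarith
      have hθ1 : θ < 1 := by
        rw [hθdef]; have : 0 < d'/(r*sn) := by positivity
        linarith
      have hxQ : x ∈ Q := by
        refine ⟨θ • onev, ?_, ?_⟩
        · intro j
          rw [PiLp.smul_apply, honevco, smul_eq_mul, mul_one]
          exact ⟨hθ0, hθ1⟩
        · show a + r • O (θ • onev) = x
          rw [O.map_smul, hOone, smul_smul, smul_smul]
          have hco : r * θ * sn = r * sn - d' := by
            rw [hθdef]; field_simp
          rw [hco, hadef, hvdef]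
          module
      have hQvol : volume Q = ENNReal.ofReal (r^n) := by
        rw [hQdef, hφdef, volume_image_affine a hr0.le O U hUmeas, hUvol, mul_one]
      -- distance of points of Q to the vertex v
      have hvφ : φ onev = v := by
        rw [hφdef]
        show a + r • O onev = v
        rw [hOone, smul_smul, hadef]
        abel
      have hdist : ∀ z ∈ Q, ∀ j, |z j - v j| < r * sn := by
        rintro z ⟨y, hyU, rfl⟩ j
        have h1 : φ y j - v j = r * ((O (y - onev)) j) := by
          rw [← hvφ, hφdef]
          show (a + r • O y) j - (a + r • O onev) j = _
          rw [O.map_sub, PiLp.add_apply, PiLp.add_apply, PiLp.smul_apply, PiLp.smul_apply,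
            PiLp.sub_apply, smul_eq_mul, smul_eq_mul]
          simp only [WithLp.ofLp_sub, Pi.sub_apply]
          ring
        have h2 : |(O (y - onev)) j| ≤ ‖y - onev‖ := by
          calc |(O (y - onev)) j| ≤ ‖O (y - onev)‖ := abs_coord_le_norm _ _
            _ = ‖y - onev‖ := O.norm_map _
        have h3 : ‖y - onev‖ < sn := by
          rw [EuclideanSpace.norm_eq, hsndef]
          apply Real.sqrt_lt_sqrt (by positivity)
          calc ∑ j, ‖(y - onev) j‖^2 < ∑ _j : Fin n, (1:ℝ) := by
                haveI : Nonempty (Fin n) := ⟨i₀⟩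
                apply Finset.sum_lt_sum_of_nonempty
                · exact Finset.univ_nonempty
                · intro j _
                  rw [PiLp.sub_apply, honevco, Real.norm_eq_abs]
                  have hyj := hyU j
                  have : |y j - 1| < 1 := by
                    rw [abs_lt]; exact ⟨by linarith [hyj.1], by linarith [hyj.2]⟩
                  calc |y j - 1|^2 < 1^2 := by
                        apply pow_lt_pow_left₀ this (abs_nonneg _) (by norm_num)
                    _ = 1 := one_pow 2
            _ = (n:ℝ) := by rw [Finset.sum_const, Finset.card_univ, Fintype.card_fin,
                  nsmul_eq_mul, mul_one]
        rw [h1, abs_mul, abs_of_pos hr0]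
        exact mul_lt_mul_of_pos_left (lt_of_le_of_lt h2 h3) hr0
      have hvne : ∀ j, j ≠ i₀ → v j = x j := by
        intro j hj
        rw [hvdef, PiLp.add_apply, PiLp.smul_apply, heco, if_neg hj, smul_eq_mul, mul_zero,
          add_zero]
      have hvi₀ : v i₀ = 1 + t := by
        rw [hvdef, PiLp.add_apply, PiLp.smul_apply, heco, if_pos rfl, smul_eq_mul, mul_one,
          hd'def]
        ring
      have hQne : ∀ z ∈ Q, ∀ j, j ≠ i₀ → z j ∈ Set.Ioo (0:ℝ) 1 := by
        intro z hz j hj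
        have h1 := hdist z hz j
        rw [hvne j hj, hrsn] at h1
        have h2 := hxne j hj
        rw [abs_lt] at h1
        exact ⟨by linarith [h2.1, h1.1], by linarith [h2.2, h1.2]⟩
      have hQi₀pos : ∀ z ∈ Q, 0 < z i₀ := by
        intro z hz
        have h1 := hdist z hz i₀
        rw [hvi₀, hrsn, abs_lt] at h1
        linarith [h1.1, ht0]
      -- points of Q outside U lie in the corner
      set K : Set (EuclideanSpace ℝ (Fin n)) := {y | ∀ i, y i ∈ Set.Icc (1 - t*sn/r) 1}
        with hKdef
      have hQdiff : Q \ U ⊆ φ '' K := by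
        rintro z ⟨⟨y, hyU, rfl⟩, hzU⟩
        have hzQ : φ y ∈ Q := ⟨y, hyU, rfl⟩
        have h1 : 1 ≤ φ y i₀ := by
          by_contra h
          push_neg at h
          apply hzU
          intro j
          by_cases hj : j = i₀
          · rw [hj]; exact ⟨hQi₀pos _ hzQ, h⟩
          · exact hQne _ hzQ j hj
        have hai₀ : a i₀ = 1 + t - r * sn := by
          rw [hadef, PiLp.sub_apply, PiLp.smul_apply, heco, if_pos rfl, smul_eq_mul, mul_one,
            hvi₀]
        have hφco : φ y i₀ = (1 + t - r * sn) + r * (sn⁻¹ * ∑ j, y j) := by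
          rw [hφdef]
          show (a + r • O y) i₀ = _
          rw [PiLp.add_apply, PiLp.smul_apply, smul_eq_mul, hcoord, hai₀]
        rw [hφco] at h1
        have hsum : (n:ℝ) - t*sn/r ≤ ∑ j, y j := by
          have h2 : r * sn - t ≤ r * (sn⁻¹ * ∑ j, y j) := by linarith
          have h3 : (r * sn - t) * (sn / r) ≤ (r * (sn⁻¹ * ∑ j, y j)) * (sn / r) := by
            apply mul_le_mul_of_nonneg_right h2 (by positivity)
          have h4 : (r * (sn⁻¹ * ∑ j, y j)) * (sn / r) = ∑ j, y j := by
            field_simp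
          have h5 : (r * sn - t) * (sn / r) = (n:ℝ) - t*sn/r := by
            field_simp
            nlinarith [hsnsq]
          rw [h4, h5] at h3
          exact h3
        refine ⟨y, ?_, rfl⟩
        intro i
        constructor
        · have h6 : ∑ j ∈ Finset.univ.erase i, y j ≤ ((n-1 : ℕ) : ℝ) := by
            calc ∑ j ∈ Finset.univ.erase i, y j
                ≤ (Finset.univ.erase i).card • (1:ℝ) := by
                  apply Finset.sum_le_card_nsmul
                  intro j _
                  exact le_of_lt (hyU j).2
              _ = ((n-1 : ℕ) : ℝ) := by
                  rw [Finset.card_erase_of_mem (Finset.mem_univ i), Finset.card_univ,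
                    Fintype.card_fin, nsmul_eq_mul, mul_one]
          have h7 : y i + ∑ j ∈ Finset.univ.erase i, y j = ∑ j, y j :=
            Finset.add_sum_erase _ _ (Finset.mem_univ i)
          have h8 : ((n-1:ℕ):ℝ) = (n:ℝ) - 1 := by
            have : (1:ℕ) ≤ n := hn
            push_cast [Nat.cast_sub this]
            ring
          rw [h8] at h6
          linarith
        · exact le_of_lt (hyU i).2
      have hKmeas : MeasurableSet K := hmeas_pi _ (fun _ => measurableSet_Icc)
      have hKvol : volume (φ '' K) = ENNReal.ofReal ((t*sn)^n) := by
        rw [hφdef, volume_image_affine a hr0.le O K hKmeas, hKdef,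
          volume_pi_set _ (fun _ => measurableSet_Icc)]
        rw [Real.volume_Icc, show (1:ℝ) - (1 - t*sn/r) = t*sn/r by ring]
        rw [Finset.prod_const, Finset.card_univ, Fintype.card_fin,
          ← ENNReal.ofReal_pow (by positivity), ← ENNReal.ofReal_mul (by positivity)]
        congr 1
        rw [← mul_pow]
        congr 1
        field_simp
      -- volume of U ∩ Q from below
      have htsn_pow : (t*sn)^n = r^n * (β * (2⁻¹)^n) := by
        rw [htsn, show r * β ^ ((n:ℝ)⁻¹) / 2 = r * β ^ ((n:ℝ)⁻¹) * 2⁻¹ by ring,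
          mul_pow, mul_pow]
        rw [← Real.rpow_natCast (β ^ ((n:ℝ)⁻¹)) n, ← Real.rpow_mul hβ0.le,
          inv_mul_cancel₀ (ne_of_gt hn0), Real.rpow_one]
        ring
      have hUQ : ENNReal.ofReal (r^n * ((1+α)/2)) ≤ volume (U ∩ Q) := by
        have hsub : volume Q ≤ volume (Q ∩ U) + volume (Q \ U) :=
          measure_le_inter_add_diff _ _ _
        have hdle : volume (Q \ U) ≤ ENNReal.ofReal ((t*sn)^n) := by
          rw [← hKvol]; exact measure_mono hQdiff
        have hreal : r^n * ((1+α)/2) + (t*sn)^n ≤ r^n := by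
          rw [htsn_pow]
          have h9 : β * (2⁻¹:ℝ)^n ≤ β * 2⁻¹ := by
            apply mul_le_mul_of_nonneg_left _ hβ0.le
            calc (2⁻¹:ℝ)^n ≤ 2⁻¹^1 := by
                  apply pow_le_pow_of_le_one (by norm_num) (by norm_num) hn
              _ = 2⁻¹ := pow_one _
          have h10 : (1+α)/2 + β * (2⁻¹:ℝ)^n ≤ 1 := by
            rw [hβdef] at h9 ⊢
            nlinarith
          nlinarith [pow_pos hr0 n]
        have hchain : ENNReal.ofReal (r^n * ((1+α)/2)) + ENNReal.ofReal ((t*sn)^n)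
            ≤ volume (Q ∩ U) + ENNReal.ofReal ((t*sn)^n) := by
          calc ENNReal.ofReal (r^n * ((1+α)/2)) + ENNReal.ofReal ((t*sn)^n)
              = ENNReal.ofReal (r^n * ((1+α)/2) + (t*sn)^n) := by
                rw [ENNReal.ofReal_add (by positivity) (by positivity)]
            _ ≤ ENNReal.ofReal (r^n) := ENNReal.ofReal_le_ofReal hreal
            _ = volume Q := hQvol.symm
            _ ≤ volume (Q ∩ U) + volume (Q \ U) := hsub
            _ ≤ volume (Q ∩ U) + ENNReal.ofReal ((t*sn)^n) := by
                gcongr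
        have := (ENNReal.add_le_add_iff_right (ENNReal.ofReal_ne_top)).1 hchain
        rwa [Set.inter_comm] at this
      -- the maximal function is large at x
      calc ENNReal.ofReal α < ENNReal.ofReal ((1+α)/2) := by
            rw [ENNReal.ofReal_lt_ofReal_iff (by positivity)]; linarith
        _ = ENNReal.ofReal (r^n * ((1+α)/2)) / ENNReal.ofReal (r^n) := by
            rw [← ENNReal.ofReal_div_of_pos (by positivity)]
            congr 1
            have hrn : (r:ℝ)^n ≠ 0 := by positivity
            field_simp
        _ ≤ volume (U ∩ Q) / volume Q := by
            rw [hQvol]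
            exact ENNReal.div_le_div_right hUQ _
        _ = (∫⁻ y in Q, U.indicator 1 y) / volume Q := by rw [hint Q]
        _ ≤ MHLc n (U.indicator 1) x := hMle x Q hQcube hxQ
  -- putting everything together
  have hsuper : U ∪ F ⊆ {x | MHLc n (U.indicator 1) x > ENNReal.ofReal α} :=
    fun x hx => hkey x hx
  have hvol_union : volume (U ∪ F) = 1 + ENNReal.ofReal (t * (2⁻¹)^n) := by
    rw [measure_union hdisjUF hFmeas, hUvol, hFvol]
  have hCH : 1 + ENNReal.ofReal (t * (2⁻¹)^n) ≤ CHLc n α := by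
    have hUpos : 0 < volume U := by rw [hUvol]; norm_num
    have hUlt : volume U < ⊤ := by rw [hUvol]; exact ENNReal.one_lt_top
    have h1 : 1 + ENNReal.ofReal (t * (2⁻¹)^n)
        ≤ volume {x | MHLc n (U.indicator 1) x > ENNReal.ofReal α} / volume U := by
      rw [hUvol, div_one, ← hvol_union]
      exact measure_mono hsuper
    refine le_trans h1 ?_
    have h2 : volume {x | MHLc n (U.indicator 1) x > ENNReal.ofReal α} / volume U
        = ⨆ (_ : MeasurableSet U), ⨆ (_ : 0 < volume U), ⨆ (_ : volume U < ⊤),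
          volume {x | MHLc n (U.indicator 1) x > ENNReal.ofReal α} / volume U := by
      rw [iSup_pos hUmeas, iSup_pos hUpos, iSup_pos hUlt]
    rw [h2]
    exact le_iSup (fun E => ⨆ (_ : MeasurableSet E), ⨆ (_ : 0 < volume E),
      ⨆ (_ : volume E < ⊤),
      volume {x | MHLc n (E.indicator 1) x > ENNReal.ofReal α} / volume E) U
  -- final arithmetic
  have hfinal : r * (2⁻¹)^n / (4 * sn) * (1/α - 1) ^ ((n:ℝ)⁻¹) ≤ t * (2⁻¹)^n := by
    have h1 : (1/α - 1 : ℝ) = β/α := by rw [hβdef]; field_simp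
    have h2 : β/α ≤ 2*β := by
      rw [div_le_iff₀ hα0]
      nlinarith
    have h3 : (1/α - 1 : ℝ) ^ ((n:ℝ)⁻¹) ≤ (2*β) ^ ((n:ℝ)⁻¹) := by
      rw [h1]
      exact Real.rpow_le_rpow (by positivity) h2 (by positivity)
    have h4 : ((2*β) : ℝ) ^ ((n:ℝ)⁻¹) = 2 ^ ((n:ℝ)⁻¹) * β ^ ((n:ℝ)⁻¹) :=
      Real.mul_rpow (by norm_num) hβ0.le
    have h5 : (2:ℝ) ^ ((n:ℝ)⁻¹) ≤ 2 := by
      calc (2:ℝ) ^ ((n:ℝ)⁻¹) ≤ 2 ^ (1:ℝ) := by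
            apply Real.rpow_le_rpow_of_exponent_le one_le_two
            rw [inv_le_one_iff₀]
            right; exact hnR
        _ = 2 := Real.rpow_one 2
    have h6 : (1/α - 1 : ℝ) ^ ((n:ℝ)⁻¹) ≤ 2 * β ^ ((n:ℝ)⁻¹) := by
      calc (1/α - 1 : ℝ) ^ ((n:ℝ)⁻¹) ≤ 2 ^ ((n:ℝ)⁻¹) * β ^ ((n:ℝ)⁻¹) := by
            rw [← h4]; exact h3
        _ ≤ 2 * β ^ ((n:ℝ)⁻¹) := mul_le_mul_of_nonneg_right h5 hβr0.le
    calc r * (2⁻¹)^n / (4 * sn) * (1/α - 1) ^ ((n:ℝ)⁻¹)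
        ≤ r * (2⁻¹)^n / (4 * sn) * (2 * β ^ ((n:ℝ)⁻¹)) := by
          apply mul_le_mul_of_nonneg_left h6 (by positivity)
      _ = t * (2⁻¹)^n := by rw [htdef]; field_simp; ring
  calc ENNReal.ofReal (r * (2⁻¹)^n / (4 * sn) * (1/α - 1) ^ ((n:ℝ)⁻¹))
      ≤ ENNReal.ofReal (t * (2⁻¹)^n) := ENNReal.ofReal_le_ofReal hfinal
    _ ≤ CHLc n α - 1 := ENNReal.le_sub_of_add_le_left ENNReal.one_ne_top hCH
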